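/- (Massey's conservation law) Let (X^n, Y^n) be jointly distributed random sequences with finite alphabets. Then the mutual information decomposes as I(X^n; Y^n) = I(X^n→Y^n) + I(DY^n→X^n). -/

import Mathlib

open Finset

noncomputable section

-- Probability of the event `E` under the pmf `p` on a finite sample space `Ω`.
open Classical in
def pr {Ω : Type*} [Fintype Ω] (p : Ω → ℝ) (E : Ω → Prop) : ℝ :=
  ∑ ω, if E ω then p ω else 0

-- Shannon entropy `H(U)` (pointwise form).
def entropy {Ω α : Type*} [Fintype Ω] (p : Ω → ℝ) (U : Ω → α) : ℝ :=
  -∑ ω, p ω * Real.log (pr p (fun ω' => U ω' = U ω))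

-- Conditional Shannon entropy `H(U | V)`.
def condEntropy {Ω α β : Type*} [Fintype Ω] (p : Ω → ℝ) (U : Ω → α) (V : Ω → β) : ℝ :=
  -∑ ω, p ω * Real.log
      (pr p (fun ω' => U ω' = U ω ∧ V ω' = V ω) / pr p (fun ω' => V ω' = V ω))

-- Mutual information `I(U ; V)`.
def mutualInfo {Ω α β : Type*} [Fintype Ω] (p : Ω → ℝ) (U : Ω → α) (V : Ω → β) : ℝ :=
  ∑ ω, p ω * Real.log
      (pr p (fun ω' => U ω' = U ω ∧ V ω' = V ω) /
        (pr p (fun ω' => U ω' = U ω) * pr p (fun ω' => V ω' = V ω)))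

-- Conditional mutual information `I(U ; V | W)`.
def condMutualInfo {Ω α β γ : Type*} [Fintype Ω] (p : Ω → ℝ)
    (U : Ω → α) (V : Ω → β) (W : Ω → γ) : ℝ :=
  ∑ ω, p ω * Real.log
      ((pr p (fun ω' => U ω' = U ω ∧ V ω' = V ω ∧ W ω' = W ω) *
          pr p (fun ω' => W ω' = W ω)) /
        (pr p (fun ω' => U ω' = U ω ∧ W ω' = W ω) *
          pr p (fun ω' => V ω' = V ω ∧ W ω' = W ω)))

-- The prefix `(X_0, …, X_{i-1})` of a random sequence `X`.
def prefixSeq {Ω 𝒳 : Type*} (X : Ω → ℕ → 𝒳) (i : ℕ) : Ω → (Fin i → 𝒳) :=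
  fun ω j => X ω (j : ℕ)

-- Directed information `I(X^n → Y^n) = ∑_{i=1}^n I(X^i ; Y_i | Y^{i-1})` (0-indexed).
def directedInfo {Ω 𝒳 𝒴 : Type*} [Fintype Ω] (p : Ω → ℝ)
    (X : Ω → ℕ → 𝒳) (Y : Ω → ℕ → 𝒴) (n : ℕ) : ℝ :=
  ∑ i ∈ Finset.range n,
    condMutualInfo p (prefixSeq X (i + 1)) (fun ω => Y ω i) (prefixSeq Y i)

section Aux

lemma pr_congr {Ω : Type*} [Fintype Ω] (p : Ω → ℝ) {E F : Ω → Prop}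
    (h : ∀ ω, E ω ↔ F ω) : pr p E = pr p F := by
  classical
  unfold pr
  exact Finset.sum_congr rfl fun ω' _ => if_congr (h ω') rfl rfl

lemma pr_pos {Ω : Type*} [Fintype Ω] {p : Ω → ℝ} (hp0 : ∀ ω, 0 ≤ p ω)
    {E : Ω → Prop} {ω : Ω} (hω : 0 < p ω) (hE : E ω) : 0 < pr p E := by
  classical
  have h1 : p ω ≤ pr p E := by
    unfold pr
    have h2 := Finset.single_le_sum (f := fun ω' => if E ω' then p ω' else 0)
      (fun i _ => by split_ifs; exacts [hp0 i, le_rfl]) (Finset.mem_univ ω)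
    simpa [hE] using h2
  linarith

lemma prefix_succ_iff {Ω 𝒳 : Type*} (X : Ω → ℕ → 𝒳) (i : ℕ) (ω ω' : Ω) :
    prefixSeq X (i+1) ω' = prefixSeq X (i+1) ω ↔
      prefixSeq X i ω' = prefixSeq X i ω ∧ X ω' i = X ω i := by
  constructor
  · intro h
    refine ⟨funext fun j => ?_, ?_⟩
    · have := congrFun h (Fin.castSucc j)
      simpa [prefixSeq] using this
    · have := congrFun h (Fin.last i)
      simpa [prefixSeq] using this
  · rintro ⟨h1, h2⟩
    funext j
    rcases lt_or_eq_of_le (Nat.lt_succ_iff.mp j.isLt) with hj | hj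
    · have := congrFun h1 ⟨j, hj⟩
      simpa [prefixSeq] using this
    · simp only [prefixSeq, hj, h2]

/-- Joint probability of the prefixes. -/
def prA {Ω 𝒳 𝒴 : Type*} [Fintype Ω] (p : Ω → ℝ) (X : Ω → ℕ → 𝒳) (Y : Ω → ℕ → 𝒴)
    (ω : Ω) (i : ℕ) : ℝ :=
  pr p (fun ω' => prefixSeq X i ω' = prefixSeq X i ω ∧ prefixSeq Y i ω' = prefixSeq Y i ω)

def prB {Ω 𝒳 : Type*} [Fintype Ω] (p : Ω → ℝ) (X : Ω → ℕ → 𝒳) (ω : Ω) (i : ℕ) : ℝ :=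
  pr p (fun ω' => prefixSeq X i ω' = prefixSeq X i ω)

def prD {Ω 𝒳 𝒴 : Type*} [Fintype Ω] (p : Ω → ℝ) (X : Ω → ℕ → 𝒳) (Y : Ω → ℕ → 𝒴)
    (ω : Ω) (i : ℕ) : ℝ :=
  pr p (fun ω' => prefixSeq X (i+1) ω' = prefixSeq X (i+1) ω ∧ prefixSeq Y i ω' = prefixSeq Y i ω)

lemma pr_true_eq_one {Ω : Type*} [Fintype Ω] {p : Ω → ℝ} (hp1 : ∑ ω, p ω = 1)
    {E : Ω → Prop} (h : ∀ ω, E ω) : pr p E = 1 := by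
  unfold pr
  simp only [h, if_true]
  exact hp1

end Aux

lemma massey_key {Ω 𝒳 𝒴 : Type*} [Fintype Ω] (p : Ω → ℝ) (hp0 : ∀ ω, 0 ≤ p ω)
    (hp1 : ∑ ω, p ω = 1) (X : Ω → ℕ → 𝒳) (Y : Ω → ℕ → 𝒴) (n : ℕ) (ω : Ω)
    (hω : 0 < p ω) :
    Real.log (prA p X Y ω n / (prB p X ω n * prB p Y ω n)) =
      ∑ i ∈ Finset.range n,
        (Real.log ((prA p X Y ω (i+1) * prB p Y ω i) /
            (prD p X Y ω i * prB p Y ω (i+1))) +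
         Real.log ((prD p X Y ω i * prB p X ω i) /
            (prA p X Y ω i * prB p X ω (i+1)))) := by
  have hA : ∀ i, 0 < prA p X Y ω i := fun i => pr_pos hp0 hω ⟨rfl, rfl⟩
  have hBX : ∀ i, 0 < prB p X ω i := fun i => pr_pos hp0 hω rfl
  have hBY : ∀ i, 0 < prB p Y ω i := fun i => pr_pos hp0 hω rfl
  have hD : ∀ i, 0 < prD p X Y ω i := fun i => pr_pos hp0 hω ⟨rfl, rfl⟩
  set L : ℕ → ℝ := fun i =>
    Real.log (prA p X Y ω i) - Real.log (prB p X ω i) - Real.log (prB p Y ω i) with hL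
  have hstep : ∀ i ∈ Finset.range n,
      (Real.log ((prA p X Y ω (i+1) * prB p Y ω i) /
          (prD p X Y ω i * prB p Y ω (i+1))) +
       Real.log ((prD p X Y ω i * prB p X ω i) /
          (prA p X Y ω i * prB p X ω (i+1)))) = L (i+1) - L i := by
    intro i _
    rw [Real.log_div (ne_of_gt (mul_pos (hA (i+1)) (hBY i)))
          (ne_of_gt (mul_pos (hD i) (hBY (i+1)))),
        Real.log_div (ne_of_gt (mul_pos (hD i) (hBX i)))
          (ne_of_gt (mul_pos (hA i) (hBX (i+1)))),
        Real.log_mul (ne_of_gt (hA (i+1))) (ne_of_gt (hBY i)),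
        Real.log_mul (ne_of_gt (hD i)) (ne_of_gt (hBY (i+1))),
        Real.log_mul (ne_of_gt (hD i)) (ne_of_gt (hBX i)),
        Real.log_mul (ne_of_gt (hA i)) (ne_of_gt (hBX (i+1))), hL]
    ring
  rw [Finset.sum_congr rfl hstep, Finset.sum_range_sub]
  have e1 : prA p X Y ω 0 = 1 :=
    pr_true_eq_one hp1 fun ω' => ⟨Subsingleton.elim _ _, Subsingleton.elim _ _⟩
  have e2 : prB p X ω 0 = 1 := pr_true_eq_one hp1 fun ω' => Subsingleton.elim _ _
  have e3 : prB p Y ω 0 = 1 := pr_true_eq_one hp1 fun ω' => Subsingleton.elim _ _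
  rw [Real.log_div (ne_of_gt (hA n)) (ne_of_gt (mul_pos (hBX n) (hBY n))),
      Real.log_mul (ne_of_gt (hBX n)) (ne_of_gt (hBY n)), hL]
  simp [e1, e2, e3]
  ring

/-- Massey's conservation law:
`I(X^n; Y^n) = I(X^n→Y^n) + I(DY^n→X^n)`, where
`I(DY^n→X^n) = Σ_{i=1}^n I(Y^{i-1}; X_i | X^{i-1})`. -/
theorem massey_conservation_law
    {Ω 𝒳 𝒴 : Type*} [Fintype Ω] [Fintype 𝒳] [Fintype 𝒴]
    (p : Ω → ℝ) (hp0 : ∀ ω, 0 ≤ p ω) (hp1 : ∑ ω, p ω = 1)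
    (X : Ω → ℕ → 𝒳) (Y : Ω → ℕ → 𝒴) (n : ℕ) :
    mutualInfo p (prefixSeq X n) (prefixSeq Y n) =
      directedInfo p X Y n +
        ∑ i ∈ Finset.range n,
          condMutualInfo p (prefixSeq Y i) (fun ω => X ω i) (prefixSeq X i) := by
  classical
  unfold mutualInfo directedInfo condMutualInfo
  simp only [← Finset.sum_add_distrib]
  rw [Finset.sum_comm]
  refine Finset.sum_congr rfl fun ω _ => ?_
  rcases eq_or_lt_of_le (hp0 ω) with hpω | hpω
  · simp [← hpω]
  · simp only [← mul_add, ← Finset.mul_sum]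
    congr 1
    have e1 : ∀ i : ℕ, pr p (fun ω' => prefixSeq X (i+1) ω' = prefixSeq X (i+1) ω ∧
        Y ω' i = Y ω i ∧ prefixSeq Y i ω' = prefixSeq Y i ω) = prA p X Y ω (i+1) :=
      fun i => pr_congr p fun ω' => by rw [prefix_succ_iff Y i ω ω']; tauto
    have e2 : ∀ i : ℕ, pr p (fun ω' => Y ω' i = Y ω i ∧
        prefixSeq Y i ω' = prefixSeq Y i ω) = prB p Y ω (i+1) :=
      fun i => pr_congr p fun ω' => by rw [prefix_succ_iff Y i ω ω']; tauto
    have e3 : ∀ i : ℕ, pr p (fun ω' => prefixSeq Y i ω' = prefixSeq Y i ω ∧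
        X ω' i = X ω i ∧ prefixSeq X i ω' = prefixSeq X i ω) = prD p X Y ω i :=
      fun i => pr_congr p fun ω' => by rw [prefix_succ_iff X i ω ω']; tauto
    have e4 : ∀ i : ℕ, pr p (fun ω' => prefixSeq Y i ω' = prefixSeq Y i ω ∧
        prefixSeq X i ω' = prefixSeq X i ω) = prA p X Y ω i :=
      fun i => pr_congr p fun ω' => and_comm
    have e5 : ∀ i : ℕ, pr p (fun ω' => X ω' i = X ω i ∧
        prefixSeq X i ω' = prefixSeq X i ω) = prB p X ω (i+1) :=
      fun i => pr_congr p fun ω' => by rw [prefix_succ_iff X i ω ω']; tauto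
    simp only [e1, e2, e3, e4, e5]
    exact massey_key p hp0 hp1 X Y n ω hpω
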